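/- For every real x > 0, the function G(x) = (1/(p+1) + 𝓘_p(x) − ((p+2)/(p+1))·𝓘_{p+1}(x)) / (x²·(𝓘_{p+1}(x) − 1)) is strictly decreasing on (0, ∞), for each fixed p with −1 < p ≤ 0. -/

import Mathlib

open Real

noncomputable def besselJn (p x : ℝ) : ℝ :=
  ∑' n : ℕ, (-(1:ℝ)/4)^n * x^(2*n) / ((Real.Gamma (p+n+1) / Real.Gamma (p+1)) * n.factorial)

noncomputable def besselIn (p x : ℝ) : ℝ :=
  ∑' n : ℕ, ((1:ℝ)/4)^n * x^(2*n) / ((Real.Gamma (p+n+1) / Real.Gamma (p+1)) * n.factorial)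

noncomputable def besselJ (p x : ℝ) : ℝ :=
  ∑' n : ℕ, (-1:ℝ)^n * (x/2)^(p+2*n) / (n.factorial * Real.Gamma (p+n+1))

namespace GAux

noncomputable def gg (p : ℝ) (n : ℕ) : ℝ :=
  Real.Gamma (p + n + 1) / Real.Gamma (p + 1) * n.factorial

noncomputable def AA (p : ℝ) (n : ℕ) : ℝ := ((n : ℝ) + 1) / ((p + n + 3) * gg p (n + 2))

noncomputable def BB (p : ℝ) (n : ℕ) : ℝ := 1 / gg (p + 1) (n + 1)

noncomputable def cc (p : ℝ) (n : ℕ) : ℝ :=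
  ((n : ℝ) + 1) / ((p + 1) * ((n : ℝ) + 2) * (p + n + 3))

lemma gamma_lb (p : ℝ) (hp : -1 < p) (n : ℕ) :
    min (Real.Gamma (p+1)) (Real.Gamma (p+2)) ≤ Real.Gamma (p + n + 1) := by
  induction n with
  | zero => simpa using min_le_left _ _
  | succ m ih =>
    have hm : (0:ℝ) ≤ m := Nat.cast_nonneg m
    have hpos : (0:ℝ) < p + m + 1 := by linarith
    have h1 : Real.Gamma (p + (m+1:ℕ) + 1) = (p + m + 1) * Real.Gamma (p + m + 1) := by
      have := Real.Gamma_add_one (ne_of_gt hpos)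
      have e : p + ((m:ℝ)+1) + 1 = (p + m + 1) + 1 := by ring
      push_cast
      rw [e, this]
    rcases Nat.eq_zero_or_pos m with h0 | h1'
    · subst h0
      have e : p + ((0+1:ℕ):ℝ) + 1 = p + 2 := by push_cast; ring
      rw [e]
      exact min_le_right _ _
    · have hge1 : (1:ℝ) ≤ p + m + 1 := by
        have : (1:ℝ) ≤ m := by exact_mod_cast h1'
        linarith
      have hΓpos : 0 < Real.Gamma (p + m + 1) := Real.Gamma_pos_of_pos hpos
      calc min (Real.Gamma (p+1)) (Real.Gamma (p+2)) ≤ Real.Gamma (p + m + 1) := ih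
        _ ≤ (p + m + 1) * Real.Gamma (p + m + 1) := le_mul_of_one_le_left hΓpos.le hge1
        _ = Real.Gamma (p + (m+1:ℕ) + 1) := h1.symm

lemma gg_pos (p : ℝ) (hp : -1 < p) (n : ℕ) : 0 < gg p n := by
  have h1 : (0:ℝ) < p + n + 1 := by
    have : (0:ℝ) ≤ n := Nat.cast_nonneg n
    linarith
  have h2 : (0:ℝ) < p + 1 := by linarith
  have := Real.Gamma_pos_of_pos h1
  have := Real.Gamma_pos_of_pos h2
  have : (0:ℝ) < n.factorial := by positivity
  unfold gg
  positivity

lemma gg_lb (p : ℝ) (hp : -1 < p) (n m : ℕ) (h : n ≤ m) :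
    min (Real.Gamma (p+1)) (Real.Gamma (p+2)) / Real.Gamma (p+1) * n.factorial ≤ gg p m := by
  have hΓ : 0 < Real.Gamma (p+1) := Real.Gamma_pos_of_pos (by linarith)
  have hfac : (n.factorial : ℝ) ≤ (m.factorial : ℝ) := by
    exact_mod_cast Nat.factorial_le h
  have hfacpos : (0:ℝ) < n.factorial := by positivity
  have hlb := gamma_lb p hp m
  unfold gg
  have hmin : 0 < min (Real.Gamma (p+1)) (Real.Gamma (p+2)) :=
    lt_min hΓ (Real.Gamma_pos_of_pos (by linarith))
  calc min (Real.Gamma (p+1)) (Real.Gamma (p+2)) / Real.Gamma (p+1) * n.factorial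
      ≤ Real.Gamma (p + m + 1) / Real.Gamma (p+1) * m.factorial := by
        have h1 : min (Real.Gamma (p+1)) (Real.Gamma (p+2)) / Real.Gamma (p+1)
            ≤ Real.Gamma (p + m + 1) / Real.Gamma (p+1) := by gcongr
        have h2 : 0 ≤ Real.Gamma (p + m + 1) / Real.Gamma (p+1) := by
          have : 0 < p + (m:ℝ) + 1 := by
            have : (0:ℝ) ≤ m := Nat.cast_nonneg m
            linarith
          positivity
        exact mul_le_mul h1 hfac hfacpos.le h2
  _ = _ := rfl

lemma summable_aux {q : ℕ → ℝ} {C r : ℝ} (hr : 0 ≤ r) (h0 : ∀ n, 0 ≤ q n)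
    (h : ∀ n, q n ≤ C / n.factorial) : Summable (fun n => q n * r^n) := by
  refine Summable.of_nonneg_of_le (fun n => mul_nonneg (h0 n) (pow_nonneg hr n))
    (fun n => ?_) ((Real.summable_pow_div_factorial r).mul_left C)
  calc q n * r^n ≤ C / n.factorial * r^n :=
        mul_le_mul_of_nonneg_right (h n) (pow_nonneg hr n)
    _ = C * (r^n / n.factorial) := by ring

lemma AA_pos (p : ℝ) (hp : -1 < p) (n : ℕ) : 0 < AA p n := by
  have h1 : (0:ℝ) < p + n + 3 := by
    have : (0:ℝ) ≤ n := Nat.cast_nonneg n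
    linarith
  have h2 := gg_pos p hp (n+2)
  unfold AA
  positivity

lemma BB_pos (p : ℝ) (hp : -1 < p) (n : ℕ) : 0 < BB p n := by
  have h2 := gg_pos (p+1) (by linarith) (n+1)
  unfold BB
  positivity

lemma AA_le (p : ℝ) (hp : -1 < p) (n : ℕ) :
    AA p n ≤ (Real.Gamma (p+1) / min (Real.Gamma (p+1)) (Real.Gamma (p+2))) / n.factorial := by
  have hΓ : 0 < Real.Gamma (p+1) := Real.Gamma_pos_of_pos (by linarith)
  have hmin : 0 < min (Real.Gamma (p+1)) (Real.Gamma (p+2)) :=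
    lt_min hΓ (Real.Gamma_pos_of_pos (by linarith))
  have hn : (0:ℝ) ≤ n := Nat.cast_nonneg n
  have hden : (0:ℝ) < p + n + 3 := by linarith
  have hfac : (0:ℝ) < n.factorial := by positivity
  have hgg := gg_lb p hp n (n+2) (by omega)
  have hggpos := gg_pos p hp (n+2)
  have hlbpos : 0 < min (Real.Gamma (p+1)) (Real.Gamma (p+2)) / Real.Gamma (p+1) * n.factorial := by
    positivity
  unfold AA
  have hden' : p + (n:ℝ) + 3 ≠ 0 := ne_of_gt hden
  have hmin' : min (Real.Gamma (p+1)) (Real.Gamma (p+2)) ≠ 0 := ne_of_gt hmin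
  have hΓ' : Real.Gamma (p+1) ≠ 0 := ne_of_gt hΓ
  have hfac' : (n.factorial : ℝ) ≠ 0 := ne_of_gt hfac
  calc ((n:ℝ)+1) / ((p + n + 3) * gg p (n+2))
      ≤ (p + n + 3) / ((p + n + 3) * (min (Real.Gamma (p+1)) (Real.Gamma (p+2)) / Real.Gamma (p+1) * n.factorial)) := by
        refine div_le_div₀ hden.le (by linarith) (by positivity) ?_
        exact mul_le_mul_of_nonneg_left hgg hden.le
      _ = (Real.Gamma (p+1) / min (Real.Gamma (p+1)) (Real.Gamma (p+2))) / n.factorial := by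
        field_simp
      _ ≤ _ := le_refl _

lemma BB_le (p : ℝ) (hp : -1 < p) (n : ℕ) :
    BB p n ≤ (Real.Gamma (p+2) / min (Real.Gamma (p+2)) (Real.Gamma (p+3))) / n.factorial := by
  have hΓ : 0 < Real.Gamma (p+2) := Real.Gamma_pos_of_pos (by linarith)
  have hmin : 0 < min (Real.Gamma (p+2)) (Real.Gamma (p+3)) :=
    lt_min hΓ (Real.Gamma_pos_of_pos (by linarith))
  have hfac : (0:ℝ) < n.factorial := by positivity
  have hgg : min (Real.Gamma (p+1+1)) (Real.Gamma (p+1+2)) / Real.Gamma (p+1+1) * n.factorial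
      ≤ gg (p+1) (n+1) := gg_lb (p+1) (by linarith) n (n+1) (by omega)
  have e2 : p + 1 + 1 = p + 2 := by ring
  have e3 : p + 1 + 2 = p + 3 := by ring
  rw [e2, e3] at hgg
  have hggpos := gg_pos (p+1) (by linarith) (n+1)
  unfold BB
  calc 1 / gg (p+1) (n+1)
      ≤ 1 / (min (Real.Gamma (p+2)) (Real.Gamma (p+3)) / Real.Gamma (p+2) * n.factorial) := by
        gcongr
      _ = (Real.Gamma (p+2) / min (Real.Gamma (p+2)) (Real.Gamma (p+3))) / n.factorial := by
        field_simp

lemma summable_AA (p : ℝ) (hp : -1 < p) {r : ℝ} (hr : 0 ≤ r) :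
    Summable (fun n => AA p n * r^n) :=
  summable_aux hr (fun n => (AA_pos p hp n).le) (AA_le p hp)

lemma summable_BB (p : ℝ) (hp : -1 < p) {r : ℝ} (hr : 0 ≤ r) :
    Summable (fun n => BB p n * r^n) :=
  summable_aux hr (fun n => (BB_pos p hp n).le) (BB_le p hp)

lemma inv_gg_le (p : ℝ) (hp : -1 < p) (n : ℕ) :
    1 / gg p n ≤ (Real.Gamma (p+1) / min (Real.Gamma (p+1)) (Real.Gamma (p+2))) / n.factorial := by
  have hΓ : 0 < Real.Gamma (p+1) := Real.Gamma_pos_of_pos (by linarith)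
  have hmin : 0 < min (Real.Gamma (p+1)) (Real.Gamma (p+2)) :=
    lt_min hΓ (Real.Gamma_pos_of_pos (by linarith))
  have hfac : (0:ℝ) < n.factorial := by positivity
  have hgg := gg_lb p hp n n le_rfl
  have hggpos := gg_pos p hp n
  calc 1 / gg p n
      ≤ 1 / (min (Real.Gamma (p+1)) (Real.Gamma (p+2)) / Real.Gamma (p+1) * n.factorial) := by
        gcongr
      _ = _ := by field_simp

lemma summable_inv_gg (p : ℝ) (hp : -1 < p) {r : ℝ} (hr : 0 ≤ r) :
    Summable (fun n => r^n / gg p n) := by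
  have := summable_aux hr (fun n => (le_of_lt (by have := gg_pos p hp n; positivity) :
      (0:ℝ) ≤ 1 / gg p n)) (inv_gg_le p hp)
  refine this.congr fun n => ?_
  ring

lemma gg_zero (p : ℝ) (hp : -1 < p) : gg p 0 = 1 := by
  have h : Real.Gamma (p+1) ≠ 0 := ne_of_gt (Real.Gamma_pos_of_pos (by linarith))
  simp [gg, div_self h]

lemma gg_succ (p : ℝ) (hp : -1 < p) (n : ℕ) :
    gg p (n+1) = gg p n * ((p + n + 1) * (n + 1)) := by
  have hn : (0:ℝ) ≤ n := Nat.cast_nonneg n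
  have h1 : Real.Gamma (p + (n+1:ℕ) + 1) = (p + n + 1) * Real.Gamma (p + n + 1) := by
    have h := Real.Gamma_add_one (ne_of_gt (show (0:ℝ) < p + (n:ℝ) + 1 by linarith))
    push_cast
    rw [show p + ((n:ℝ)+1) + 1 = (p + n + 1) + 1 by ring, h]
  unfold gg
  rw [h1, Nat.factorial_succ]
  push_cast
  ring

lemma gg_shift (p : ℝ) (hp : -1 < p) (n : ℕ) :
    gg (p+1) n = gg p n * ((p + n + 1) / (p + 1)) := by
  have hn : (0:ℝ) ≤ n := Nat.cast_nonneg n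
  have hp1 : (0:ℝ) < p + 1 := by linarith
  have h1 : Real.Gamma (p + 1 + n + 1) = (p + n + 1) * Real.Gamma (p + n + 1) := by
    have h := Real.Gamma_add_one (ne_of_gt (show (0:ℝ) < p + (n:ℝ) + 1 by linarith))
    rw [show p + 1 + (n:ℝ) + 1 = (p + n + 1) + 1 by ring, h]
  have h2 : Real.Gamma (p + 1 + 1) = (p + 1) * Real.Gamma (p + 1) := by
    rw [show p + 1 + 1 = (p + 1) + 1 by ring, Real.Gamma_add_one (ne_of_gt hp1)]
  have hΓ : Real.Gamma (p+1) ≠ 0 := ne_of_gt (Real.Gamma_pos_of_pos hp1)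
  unfold gg
  rw [h1, h2]
  field_simp

lemma AA_cc (p : ℝ) (hp : -1 < p) (n : ℕ) : AA p n = cc p n * BB p n := by
  have hn : (0:ℝ) ≤ n := Nat.cast_nonneg n
  have hp1 : (0:ℝ) < p + 1 := by linarith
  have h1 : gg p (n+1+1) = gg p (n+1) * ((p + (n+1:ℕ) + 1) * ((n+1:ℕ) + 1)) :=
    gg_succ p hp (n+1)
  have h2 : gg (p+1) (n+1) = gg p (n+1) * ((p + (n+1:ℕ) + 1) / (p + 1)) :=
    gg_shift p hp (n+1)
  have hG : 0 < gg p (n+1) := gg_pos p hp (n+1)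
  have hpn2 : (0:ℝ) < p + (n:ℝ) + 2 := by linarith
  have hpn3 : (0:ℝ) < p + (n:ℝ) + 3 := by linarith
  unfold AA BB cc
  rw [show n + 2 = n + 1 + 1 from rfl, h1, h2]
  push_cast
  rw [show p + ((n:ℝ)+1) + 1 = p + n + 2 by ring]
  field_simp
  ring

lemma cc_anti (p : ℝ) (hp1 : -1 < p) (hp2 : p ≤ 0) (n : ℕ) : cc p (n+1) ≤ cc p n := by
  have hn : (0:ℝ) ≤ n := Nat.cast_nonneg n
  have hp1' : (0:ℝ) < p + 1 := by linarith
  have d1 : (0:ℝ) < (p+1) * ((n:ℝ)+2) * (p+n+3) :=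
    mul_pos (mul_pos hp1' (by linarith)) (by linarith)
  have d2 : (0:ℝ) < (p+1) * (((n:ℝ)+1)+2) * (p+((n:ℝ)+1)+3) :=
    mul_pos (mul_pos hp1' (by linarith)) (by linarith)
  unfold cc
  push_cast
  rw [div_le_div_iff₀ d2 d1]
  have key : (0:ℝ) ≤ (p+1) * ((n:ℝ)^2 + 3*n - p) :=
    mul_nonneg (by linarith) (by nlinarith)
  nlinarith [key]

lemma cc_21 (p : ℝ) (hp1 : -1 < p) (hp2 : p ≤ 0) : cc p 2 < cc p 1 := by
  have hp1' : (0:ℝ) < p + 1 := by linarith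
  unfold cc
  norm_num
  rw [div_lt_div_iff₀ (by nlinarith) (by nlinarith)]
  nlinarith [mul_pos hp1' (show (0:ℝ) < 4 - p by linarith)]

lemma cc_le (p : ℝ) (hp1 : -1 < p) (hp2 : p ≤ 0) {m k : ℕ} (h : m ≤ k) :
    cc p k ≤ cc p m :=
  antitone_nat_of_succ_le (cc_anti p hp1 hp2) h

lemma cc_pos (p : ℝ) (hp1 : -1 < p) (n : ℕ) : 0 < cc p n := by
  have hn : (0:ℝ) ≤ n := Nat.cast_nonneg n
  unfold cc
  have h1 : (0:ℝ) < p + 1 := by linarith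
  exact div_pos (by linarith) (mul_pos (mul_pos h1 (by linarith)) (by linarith))

lemma besselIn_eq (p x : ℝ) : besselIn p x = ∑' n : ℕ, (x^2/4)^n / gg p n := by
  unfold besselIn gg
  refine tsum_congr fun n => ?_
  rw [pow_mul, ← mul_pow, show (1:ℝ)/4 * x^2 = x^2/4 from by ring]

lemma denom_eq (p : ℝ) (hp : -1 < p) (x : ℝ) :
    x^2 * (besselIn (p+1) x - 1)
      = 4 * (x^2/4)^2 * ∑' n : ℕ, BB p n * (x^2/4)^n := by
  set t := x^2/4 with ht
  have ht0 : (0:ℝ) ≤ t := by rw [ht]; positivity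
  have hsum : Summable (fun n : ℕ => t^n / gg (p+1) n) :=
    summable_inv_gg (p+1) (by linarith) ht0
  rw [besselIn_eq (p+1) x, ← ht, Summable.tsum_eq_zero_add hsum]
  have h0 : t^0 / gg (p+1) 0 = 1 := by
    rw [pow_zero, gg_zero (p+1) (by linarith)]
    norm_num
  rw [h0]
  have e1 : ∀ n : ℕ, t^(n+1) / gg (p+1) (n+1) = t * (BB p n * t^n) := by
    intro n
    unfold BB
    rw [pow_succ]
    ring
  have e2 : ∑' n : ℕ, t^(n+1) / gg (p+1) (n+1) = t * ∑' n : ℕ, BB p n * t^n := by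
    rw [tsum_congr e1, tsum_mul_left]
  have hx2 : x^2 = 4 * t := by rw [ht]; ring
  rw [show (1:ℝ) + ∑' n : ℕ, t^(n+1) / gg (p+1) (n+1) - 1
      = ∑' n : ℕ, t^(n+1) / gg (p+1) (n+1) by ring, e2, hx2]
  ring

set_option maxHeartbeats 1000000 in
lemma numer_eq (p : ℝ) (hp : -1 < p) (x : ℝ) :
    1/(p+1) + besselIn p x - (p+2)/(p+1) * besselIn (p+1) x
      = (x^2/4)^2 * ∑' n : ℕ, AA p n * (x^2/4)^n := by
  have hp1 : (0:ℝ) < p + 1 := by linarith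
  set t := x^2/4 with ht
  have ht0 : (0:ℝ) ≤ t := by rw [ht]; positivity
  have hsum1 : Summable (fun n : ℕ => t^n / gg p n) := summable_inv_gg p hp ht0
  have hsum2 : Summable (fun n : ℕ => t^n / gg (p+1) n) :=
    summable_inv_gg (p+1) (by linarith) ht0
  have hs1 : Summable (fun n : ℕ => t^(n+1) / gg p (n+1)) :=
    (summable_nat_add_iff 1).mpr hsum1
  have hs2 : Summable (fun n : ℕ => t^(n+1) / gg (p+1) (n+1)) :=
    (summable_nat_add_iff 1).mpr hsum2
  rw [besselIn_eq p x, besselIn_eq (p+1) x, ← ht,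
    Summable.tsum_eq_zero_add hsum1, Summable.tsum_eq_zero_add hsum2]
  have h01 : t^0 / gg p 0 = 1 := by rw [pow_zero, gg_zero p hp]; norm_num
  have h02 : t^0 / gg (p+1) 0 = 1 := by
    rw [pow_zero, gg_zero (p+1) (by linarith)]; norm_num
  rw [h01, h02]
  have e : ∀ n : ℕ, t^(n+1) / gg p (n+1) - (p+2)/(p+1) * (t^(n+1) / gg (p+1) (n+1))
      = (n : ℝ) / ((p + n + 2) * gg p (n+1)) * t^(n+1) := by
    intro n
    have hn : (0:ℝ) ≤ n := Nat.cast_nonneg n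
    have hsh : gg (p+1) (n+1) = gg p (n+1) * ((p + (n+1:ℕ) + 1) / (p + 1)) :=
      gg_shift p hp (n+1)
    have hG : 0 < gg p (n+1) := gg_pos p hp (n+1)
    have hpn2 : (0:ℝ) < p + (n:ℝ) + 2 := by linarith
    rw [hsh]
    push_cast
    rw [show p + ((n:ℝ)+1) + 1 = p + n + 2 by ring]
    field_simp
    ring
  have key : (∑' n : ℕ, t^(n+1) / gg p (n+1))
      - (p+2)/(p+1) * ∑' n : ℕ, t^(n+1) / gg (p+1) (n+1)
      = t^2 * ∑' n : ℕ, AA p n * t^n := by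
    rw [← tsum_mul_left, ← Summable.tsum_sub hs1 (hs2.mul_left ((p+2)/(p+1))), tsum_congr e]
    have hw : Summable (fun n : ℕ => (n : ℝ) / ((p + n + 2) * gg p (n+1)) * t^(n+1)) :=
      (hs1.sub (hs2.mul_left ((p+2)/(p+1)))).congr e
    rw [Summable.tsum_eq_zero_add hw]
    have hw0 : ((0:ℕ) : ℝ) / ((p + (0:ℕ) + 2) * gg p (0+1)) * t^(0+1) = 0 := by
      norm_num
    rw [hw0, zero_add]
    have e2 : ∀ n : ℕ, ((n+1:ℕ) : ℝ) / ((p + (n+1:ℕ) + 2) * gg p ((n+1)+1)) * t^((n+1)+1)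
        = t^2 * (AA p n * t^n) := by
      intro n
      unfold AA
      push_cast
      rw [show p + ((n:ℝ)+1) + 2 = p + n + 3 by ring,
        show n + 1 + 1 = n + 2 from rfl,
        show t^(n+2) = t^2 * t^n by ring]
      ring
    rw [tsum_congr e2, tsum_mul_left]
  have hc : 1/(p+1) + 1 - (p+2)/(p+1) = 0 := by
    field_simp
    ring
  linear_combination key + hc

lemma AB_le (p : ℝ) (hp1 : -1 < p) (hp2 : p ≤ 0) {m k : ℕ} (h : m ≤ k) :
    AA p k * BB p m ≤ AA p m * BB p k := by
  rw [AA_cc p hp1 k, AA_cc p hp1 m]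
  have hcc := cc_le p hp1 hp2 h
  have hB1 := (BB_pos p hp1 k).le
  have hB2 := (BB_pos p hp1 m).le
  calc cc p k * BB p k * BB p m ≤ cc p m * BB p k * BB p m := by
        have := mul_le_mul_of_nonneg_right (mul_le_mul_of_nonneg_right hcc hB1) hB2
        linarith [this]
    _ = cc p m * BB p m * BB p k := by ring

lemma pow_cross {s t : ℝ} (hs : 0 < s) (hst : s < t) {m k : ℕ} (h : m ≤ k) :
    s^k * t^m ≤ s^m * t^k := by
  have ht : 0 < t := hs.trans hst
  obtain ⟨d, rfl⟩ : ∃ d, k = m + d := ⟨k - m, by omega⟩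
  have hd : s^d ≤ t^d := pow_le_pow_left₀ hs.le hst.le d
  calc s^(m+d) * t^m = (s^m * t^m) * s^d := by rw [pow_add]; ring
    _ ≤ (s^m * t^m) * t^d := mul_le_mul_of_nonneg_left hd (by positivity)
    _ = s^m * t^(m+d) := by rw [pow_add]; ring

set_option maxHeartbeats 2000000 in
lemma core (p : ℝ) (hp1 : -1 < p) (hp2 : p ≤ 0) {s t : ℝ} (hs : 0 < s) (hst : s < t) :
    (∑' n : ℕ, AA p n * t^n) * (∑' n : ℕ, BB p n * s^n)
      < (∑' n : ℕ, AA p n * s^n) * (∑' n : ℕ, BB p n * t^n) := by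
  have ht : 0 < t := hs.trans hst
  have SAs := summable_AA p hp1 hs.le
  have SAt := summable_AA p hp1 ht.le
  have SBs := summable_BB p hp1 hs.le
  have SBt := summable_BB p hp1 ht.le
  have hnorm : ∀ {f : ℕ → ℝ}, (∀ n, 0 ≤ f n) → Summable f → Summable (fun n => ‖f n‖) := by
    intro f h0 hf
    have : (fun n => ‖f n‖) = f := funext fun n => by
      rw [Real.norm_eq_abs, abs_of_nonneg (h0 n)]
    rw [this]
    exact hf
  have hAs : ∀ n, 0 ≤ AA p n * s^n := fun n =>
    mul_nonneg (AA_pos p hp1 n).le (pow_nonneg hs.le n)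
  have hAt : ∀ n, 0 ≤ AA p n * t^n := fun n =>
    mul_nonneg (AA_pos p hp1 n).le (pow_nonneg ht.le n)
  have hBs : ∀ n, 0 ≤ BB p n * s^n := fun n =>
    mul_nonneg (BB_pos p hp1 n).le (pow_nonneg hs.le n)
  have hBt : ∀ n, 0 ≤ BB p n * t^n := fun n =>
    mul_nonneg (BB_pos p hp1 n).le (pow_nonneg ht.le n)
  have h1 : (∑' n : ℕ, AA p n * s^n) * (∑' n : ℕ, BB p n * t^n)
      = ∑' z : ℕ × ℕ, (AA p z.1 * s^z.1) * (BB p z.2 * t^z.2) :=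
    tsum_mul_tsum_of_summable_norm (hnorm hAs SAs) (hnorm hBt SBt)
  have h2 : (∑' n : ℕ, AA p n * t^n) * (∑' n : ℕ, BB p n * s^n)
      = ∑' z : ℕ × ℕ, (AA p z.1 * t^z.1) * (BB p z.2 * s^z.2) :=
    tsum_mul_tsum_of_summable_norm (hnorm hAt SAt) (hnorm hBs SBs)
  have P1 : Summable (fun z : ℕ × ℕ => (AA p z.1 * s^z.1) * (BB p z.2 * t^z.2)) :=
    summable_mul_of_summable_norm (hnorm hAs SAs) (hnorm hBt SBt)
  have P2' : Summable (fun z : ℕ × ℕ => (BB p z.1 * s^z.1) * (AA p z.2 * t^z.2)) :=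
    summable_mul_of_summable_norm (hnorm hBs SBs) (hnorm hAt SAt)
  have P2 : Summable (fun z : ℕ × ℕ => (AA p z.2 * t^z.2) * (BB p z.1 * s^z.1)) :=
    P2'.congr fun z => mul_comm _ _
  set D : ℕ × ℕ → ℝ :=
    fun z => (AA p z.1 * s^z.1) * (BB p z.2 * t^z.2)
      - (AA p z.2 * t^z.2) * (BB p z.1 * s^z.1) with hDdef
  have hD : Summable D := P1.sub P2
  have hDswap : Summable (fun z : ℕ × ℕ => D (z.2, z.1)) := by
    have := (Equiv.prodComm ℕ ℕ).summable_iff.mpr hD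
    exact this.congr fun z => rfl
  have h3 : ∑' z : ℕ × ℕ, (AA p z.1 * t^z.1) * (BB p z.2 * s^z.2)
      = ∑' z : ℕ × ℕ, (AA p z.2 * t^z.2) * (BB p z.1 * s^z.1) := by
    have := Equiv.tsum_eq (Equiv.prodComm ℕ ℕ)
      (fun z : ℕ × ℕ => (AA p z.1 * t^z.1) * (BB p z.2 * s^z.2))
    simpa using this.symm
  have hswapeq : ∑' z : ℕ × ℕ, D (z.2, z.1) = ∑' z : ℕ × ℕ, D z := by
    have := Equiv.tsum_eq (Equiv.prodComm ℕ ℕ) D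
    exact this
  have hSnn : ∀ z : ℕ × ℕ, 0 ≤ D z + D (z.2, z.1) := by
    rintro ⟨m, k⟩
    have hform : D (m, k) + D ((m, k).2, (m, k).1)
        = (AA p m * BB p k - AA p k * BB p m) * (s^m * t^k - s^k * t^m) := by
      simp only [hDdef]
      ring
    rw [hform]
    rcases le_total m k with h | h
    · exact mul_nonneg (sub_nonneg.mpr (AB_le p hp1 hp2 h))
        (sub_nonneg.mpr (pow_cross hs hst h))
    · have h1' := AB_le p hp1 hp2 h
      have h2' := pow_cross hs hst h
      nlinarith [h1', h2']
  have hSpos : 0 < D (1, 2) + D (2, 1) := by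
    have e12 : D (1, 2) + D (2, 1)
        = (AA p 1 * BB p 2 - AA p 2 * BB p 1) * (s^1 * t^2 - s^2 * t^1) := by
      simp only [hDdef]
      ring
    have f1 : 0 < AA p 1 * BB p 2 - AA p 2 * BB p 1 := by
      have e : AA p 1 * BB p 2 - AA p 2 * BB p 1 = (cc p 1 - cc p 2) * (BB p 1 * BB p 2) := by
        rw [AA_cc p hp1 1, AA_cc p hp1 2]
        ring
      rw [e]
      exact mul_pos (sub_pos.mpr (cc_21 p hp1 hp2))
        (mul_pos (BB_pos p hp1 1) (BB_pos p hp1 2))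
    have f2 : 0 < s^1 * t^2 - s^2 * t^1 := by
      have h := mul_pos (mul_pos hs ht) (sub_pos.mpr hst)
      nlinarith [h]
    rw [e12]
    exact mul_pos f1 f2
  have hS : Summable (fun z : ℕ × ℕ => D z + D (z.2, z.1)) := hD.add hDswap
  have htsumpos : 0 < ∑' z : ℕ × ℕ, (D z + D (z.2, z.1)) :=
    Summable.tsum_pos hS hSnn (1, 2) hSpos
  have hsplit : ∑' z : ℕ × ℕ, (D z + D (z.2, z.1))
      = (∑' z : ℕ × ℕ, D z) + ∑' z : ℕ × ℕ, D (z.2, z.1) := Summable.tsum_add hD hDswap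
  have hDpos : 0 < ∑' z : ℕ × ℕ, D z := by
    rw [hsplit, hswapeq] at htsumpos
    linarith
  have hdiff : (∑' z : ℕ × ℕ, (AA p z.1 * s^z.1) * (BB p z.2 * t^z.2))
      - (∑' z : ℕ × ℕ, (AA p z.2 * t^z.2) * (BB p z.1 * s^z.1))
      = ∑' z : ℕ × ℕ, D z := by
    rw [hDdef]
    exact (Summable.tsum_sub P1 P2).symm
  rw [h1, h2, h3]
  linarith [hdiff, hDpos]

end GAux

theorem G_strict_anti (p : ℝ) (hp1 : -1 < p) (hp2 : p ≤ 0) :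
    StrictAntiOn (fun x : ℝ =>
      (1/(p+1) + besselIn p x - ((p+2)/(p+1)) * besselIn (p+1) x) /
        (x^2 * (besselIn (p+1) x - 1))) (Set.Ioi (0:ℝ)) := by
  intro x hx y hy hxy
  simp only [Set.mem_Ioi] at hx hy
  have hs : (0:ℝ) < x^2/4 := by positivity
  have ht : (0:ℝ) < y^2/4 := by positivity
  have hst : x^2/4 < y^2/4 := by nlinarith
  dsimp only
  rw [GAux.numer_eq p hp1 x, GAux.numer_eq p hp1 y,
    GAux.denom_eq p hp1 x, GAux.denom_eq p hp1 y]
  set s : ℝ := x^2/4 with hsdef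
  set t : ℝ := y^2/4 with htdef
  have reduce : ∀ (u SA SB : ℝ), 0 < u → (u^2*SA)/(4*u^2*SB) = SA/(4*SB) := by
    intro u SA SB hu
    rw [show (4:ℝ)*u^2*SB = u^2*(4*SB) by ring]
    exact mul_div_mul_left SA (4*SB) (by positivity)
  rw [reduce s _ _ hs, reduce t _ _ ht]
  have hSBs : 0 < ∑' n : ℕ, GAux.BB p n * s^n :=
    Summable.tsum_pos (GAux.summable_BB p hp1 hs.le)
      (fun n => mul_nonneg (GAux.BB_pos p hp1 n).le (pow_nonneg hs.le n)) 0
      (by simpa using GAux.BB_pos p hp1 0)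
  have hSBt : 0 < ∑' n : ℕ, GAux.BB p n * t^n :=
    Summable.tsum_pos (GAux.summable_BB p hp1 ht.le)
      (fun n => mul_nonneg (GAux.BB_pos p hp1 n).le (pow_nonneg ht.le n)) 0
      (by simpa using GAux.BB_pos p hp1 0)
  rw [div_lt_div_iff₀ (by linarith) (by linarith)]
  have hcore := GAux.core p hp1 hp2 hs hst
  linarith [hcore]
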